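/- arXiv:1003.0985 — 11 statements merged into one kernel-verified Lean document; each statement's English description precedes it below -/
import Mathlib

section
/- Let E be a simplicial commutative k-algebra whose Moore complex satisfies NE_4 = 0. Then for all x_1 ∈ NE_1 and y_3 ∈ NE_3 the following identity holds in E_3: (s_2 s_1 s_0 (d_1 x_1) − s_1 s_0 x_1) · y_3 = 0. -/
/-- A simplicial commutative `k`-algebra: a family of commutative `k`-algebras
`obj n` together with face algebra homomorphisms `d n i : obj (n+1) →ₐ[k] obj n`
(representing `d_i : E_{n+1} → E_n`, `0 ≤ i ≤ n+1`) and degeneracy algebra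
homomorphisms `s n i : obj n →ₐ[k] obj (n+1)` (representing
`s_i : E_n → E_{n+1}`, `0 ≤ i ≤ n`), satisfying the simplicial identities. -/
structure SimplicialCommAlg (k : Type*) [CommRing k]
    (obj : ℕ → Type*) [∀ n, CommRing (obj n)] [∀ n, Algebra k (obj n)] where
  d : (n : ℕ) → ℕ → (obj (n + 1) →ₐ[k] obj n)
  s : (n : ℕ) → ℕ → (obj n →ₐ[k] obj (n + 1))
  dd : ∀ (n i j : ℕ), i < j → j ≤ n + 2 →
    (d n i).comp (d (n + 1) j) = (d n (j - 1)).comp (d (n + 1) i)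
  ds_lt : ∀ (m i j : ℕ), i < j → j ≤ m + 1 →
    (d (m + 1) i).comp (s (m + 1) j) = (s m (j - 1)).comp (d m i)
  ds_self : ∀ (n j : ℕ), j ≤ n → (d n j).comp (s n j) = AlgHom.id k (obj n)
  ds_succ : ∀ (n j : ℕ), j ≤ n → (d n (j + 1)).comp (s n j) = AlgHom.id k (obj n)
  ds_gt : ∀ (m i j : ℕ), j + 1 < i → i ≤ m + 2 →
    (d (m + 1) i).comp (s (m + 1) j) = (s m j).comp (d m (i - 1))
  ss : ∀ (n i j : ℕ), i ≤ j → j ≤ n →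
    (s (n + 1) i).comp (s n j) = (s (n + 1) (j + 1)).comp (s n i)

theorem stmt_5 {k : Type*} [CommRing k] {obj : ℕ → Type*}
    [∀ n, CommRing (obj n)] [∀ n, Algebra k (obj n)]
    (E : SimplicialCommAlg k obj)
    (hNE4 : ∀ w : obj 4, E.d 3 0 w = 0 → E.d 3 1 w = 0 →
      E.d 3 2 w = 0 → E.d 3 3 w = 0 → w = 0)
    (x1 : obj 1) (hx1 : E.d 0 0 x1 = 0) (y3 : obj 3) (hy3 : E.d 2 0 y3 = 0 ∧ E.d 2 1 y3 = 0 ∧ E.d 2 2 y3 = 0) :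
    (E.s 2 2 (E.s 1 1 (E.s 0 0 (E.d 0 1 x1))) - E.s 2 1 (E.s 1 0 x1)) * y3 = 0 := by
  obtain ⟨hy0, hy1, hy2⟩ := hy3
  set a : obj 3 := E.s 2 2 (E.s 1 1 (E.s 0 0 (E.d 0 1 x1))) - E.s 2 1 (E.s 1 0 x1) with ha
  -- d 2 3 a = 0
  have hda : E.d 2 3 a = 0 := by
    have h1 := DFunLike.congr_fun (E.ds_succ 2 2 (by norm_num))
      (E.s 1 1 (E.s 0 0 (E.d 0 1 x1)))
    have h2 := DFunLike.congr_fun (E.ds_gt 1 3 1 (by norm_num) (by norm_num))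
      (E.s 1 0 x1)
    have h3 := DFunLike.congr_fun (E.ds_gt 0 2 0 (by norm_num) (by norm_num)) x1
    simp only [AlgHom.comp_apply, AlgHom.id_apply] at h1 h2 h3
    simp [ha, map_sub, h1, h2, h3]
  set b : obj 4 := E.s 3 3 a - E.s 3 2 a with hb
  set w : obj 4 := b * E.s 3 3 y3 with hw
  -- faces 0,1,2 of s 3 3 y3 vanish
  have hs0 : E.d 3 0 (E.s 3 3 y3) = 0 := by
    have h := DFunLike.congr_fun (E.ds_lt 2 0 3 (by norm_num) (by norm_num)) y3
    simp only [AlgHom.comp_apply] at h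
    simpa [hy0] using h
  have hs1 : E.d 3 1 (E.s 3 3 y3) = 0 := by
    have h := DFunLike.congr_fun (E.ds_lt 2 1 3 (by norm_num) (by norm_num)) y3
    simp only [AlgHom.comp_apply] at h
    simpa [hy1] using h
  have hs2 : E.d 3 2 (E.s 3 3 y3) = 0 := by
    have h := DFunLike.congr_fun (E.ds_lt 2 2 3 (by norm_num) (by norm_num)) y3
    simp only [AlgHom.comp_apply] at h
    simpa [hy2] using h
  -- d 3 3 b = 0
  have hb3 : E.d 3 3 b = 0 := by
    have h1 := DFunLike.congr_fun (E.ds_self 3 3 (by norm_num)) a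
    have h2 := DFunLike.congr_fun (E.ds_succ 3 2 (by norm_num)) a
    simp only [AlgHom.comp_apply, AlgHom.id_apply] at h1 h2
    simp [hb, map_sub, h1, h2]
  -- w is in NE_4, hence 0
  have hw0 : w = 0 := by
    apply hNE4
    · rw [hw, map_mul, hs0, mul_zero]
    · rw [hw, map_mul, hs1, mul_zero]
    · rw [hw, map_mul, hs2, mul_zero]
    · rw [hw, map_mul, hb3, zero_mul]
  -- d 3 4 w = a * y3
  have hd4 : E.d 3 4 w = a * y3 := by
    have h1 := DFunLike.congr_fun (E.ds_succ 3 3 (by norm_num)) a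
    have h2 := DFunLike.congr_fun (E.ds_gt 2 4 2 (by norm_num) (by norm_num)) a
    have h3 := DFunLike.congr_fun (E.ds_succ 3 3 (by norm_num)) y3
    simp only [AlgHom.comp_apply, AlgHom.id_apply] at h1 h2 h3
    rw [hw, map_mul, h3, hb, map_sub, h1, h2, hda, map_zero, sub_zero]
  rw [← hd4, hw0, map_zero]
end

section
/- Let E be a simplicial commutative k-algebra whose Moore complex satisfies NE_4 = 0. Then for all x_1 ∈ NE_1 and y_3 ∈ NE_3 the following identity holds in E_3: s_2 s_1 x_1 · (s_0 d_3 y_3 − s_1 d_3 y_3 + s_2 d_3 y_3 − y_3) = 0. -/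
theorem stmt_6 {k : Type*} [CommRing k] {obj : ℕ → Type*}
    [∀ n, CommRing (obj n)] [∀ n, Algebra k (obj n)]
    (E : SimplicialCommAlg k obj)
    (hNE4 : ∀ w : obj 4, E.d 3 0 w = 0 → E.d 3 1 w = 0 →
      E.d 3 2 w = 0 → E.d 3 3 w = 0 → w = 0)
    (x1 : obj 1) (hx1 : E.d 0 0 x1 = 0) (y3 : obj 3) (hy3 : E.d 2 0 y3 = 0 ∧ E.d 2 1 y3 = 0 ∧ E.d 2 2 y3 = 0) :
    E.s 2 2 (E.s 1 1 x1) *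
      (E.s 2 0 (E.d 2 3 y3) - E.s 2 1 (E.d 2 3 y3) + E.s 2 2 (E.d 2 3 y3) - y3) = 0 := by
  obtain ⟨h0, h1, h2⟩ := hy3
  set a := E.s 2 2 (E.s 1 1 x1) with ha
  set b := E.d 2 3 y3 with hb
  set z := E.s 2 0 b - E.s 2 1 b + E.s 2 2 b - y3 with hzdef
  -- small computations on b
  have d11b : E.d 1 1 b = 0 := by
    have h := AlgHom.congr_fun (E.dd 1 1 3 (by omega) (by omega)) y3
    simp only [AlgHom.comp_apply] at h
    rw [hb, h]
    norm_num [h1]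
  have d12b : E.d 1 2 b = 0 := by
    have h := AlgHom.congr_fun (E.dd 1 2 3 (by omega) (by omega)) y3
    simp only [AlgHom.comp_apply] at h
    rw [hb, h]
    norm_num [h2]
  -- z is killed by d 2 1, d 2 2, d 2 3
  have hz1 : E.d 2 1 z = 0 := by
    have t1 := AlgHom.congr_fun (E.ds_succ 2 0 (by omega)) b
    have t2 := AlgHom.congr_fun (E.ds_self 2 1 (by omega)) b
    have t3 := AlgHom.congr_fun (E.ds_lt 1 1 2 (by omega) (by omega)) b
    simp only [AlgHom.comp_apply, AlgHom.id_apply] at t1 t2 t3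
    rw [hzdef, map_sub, map_add, map_sub, t1, t2, t3]
    norm_num [d11b, h1]
  have hz2 : E.d 2 2 z = 0 := by
    have t1 := AlgHom.congr_fun (E.ds_gt 1 2 0 (by omega) (by omega)) b
    have t2 := AlgHom.congr_fun (E.ds_succ 2 1 (by omega)) b
    have t3 := AlgHom.congr_fun (E.ds_self 2 2 (by omega)) b
    simp only [AlgHom.comp_apply, AlgHom.id_apply] at t1 t2 t3
    rw [hzdef, map_sub, map_add, map_sub, t1, t2, t3]
    norm_num [d11b, h2]
  have hz3 : E.d 2 3 z = 0 := by
    have t1 := AlgHom.congr_fun (E.ds_gt 1 3 0 (by omega) (by omega)) b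
    have t2 := AlgHom.congr_fun (E.ds_gt 1 3 1 (by omega) (by omega)) b
    have t3 := AlgHom.congr_fun (E.ds_succ 2 2 (by omega)) b
    simp only [AlgHom.comp_apply, AlgHom.id_apply] at t1 t2 t3
    rw [hzdef, map_sub, map_add, map_sub, t1, t2, t3]
    norm_num [d12b]
    exact sub_eq_zero.mpr hb
  -- the 4-dimensional witness
  set w := E.s 3 3 a * (E.s 3 3 z - E.s 3 2 z + E.s 3 1 z - E.s 3 0 z) with hwdef
  have hw0 : E.d 3 0 w = 0 := by
    have u1 := AlgHom.congr_fun (E.ds_lt 2 0 3 (by omega) (by omega)) a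
    have u2 := AlgHom.congr_fun (E.ds_lt 1 0 2 (by omega) (by omega)) (E.s 1 1 x1)
    have u3 := AlgHom.congr_fun (E.ds_lt 0 0 1 (by omega) (by omega)) x1
    simp only [AlgHom.comp_apply] at u1 u2 u3
    rw [hwdef, map_mul, u1, ha, u2, u3, hx1]
    simp
  have hw1 : E.d 3 1 w = 0 := by
    have t1 := AlgHom.congr_fun (E.ds_lt 2 1 3 (by omega) (by omega)) z
    have t2 := AlgHom.congr_fun (E.ds_lt 2 1 2 (by omega) (by omega)) z
    have t3 := AlgHom.congr_fun (E.ds_self 3 1 (by omega)) z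
    have t4 := AlgHom.congr_fun (E.ds_succ 3 0 (by omega)) z
    simp only [AlgHom.comp_apply, AlgHom.id_apply] at t1 t2 t3 t4
    rw [hwdef, map_mul, map_sub, map_add, map_sub, t1, t2, t3, t4]
    norm_num [hz1]
  have hw2 : E.d 3 2 w = 0 := by
    have t1 := AlgHom.congr_fun (E.ds_lt 2 2 3 (by omega) (by omega)) z
    have t2 := AlgHom.congr_fun (E.ds_self 3 2 (by omega)) z
    have t3 := AlgHom.congr_fun (E.ds_succ 3 1 (by omega)) z
    have t4 := AlgHom.congr_fun (E.ds_gt 2 2 0 (by omega) (by omega)) z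
    simp only [AlgHom.comp_apply, AlgHom.id_apply] at t1 t2 t3 t4
    rw [hwdef, map_mul, map_sub, map_add, map_sub, t1, t2, t3, t4]
    norm_num [hz1, hz2]
  have hw3 : E.d 3 3 w = 0 := by
    have t1 := AlgHom.congr_fun (E.ds_self 3 3 (by omega)) z
    have t2 := AlgHom.congr_fun (E.ds_succ 3 2 (by omega)) z
    have t3 := AlgHom.congr_fun (E.ds_gt 2 3 1 (by omega) (by omega)) z
    have t4 := AlgHom.congr_fun (E.ds_gt 2 3 0 (by omega) (by omega)) z
    simp only [AlgHom.comp_apply, AlgHom.id_apply] at t1 t2 t3 t4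
    rw [hwdef, map_mul, map_sub, map_add, map_sub, t1, t2, t3, t4]
    norm_num [hz2]
  have hw : w = 0 := hNE4 w hw0 hw1 hw2 hw3
  have hd4 : E.d 3 4 w = a * z := by
    have t1 := AlgHom.congr_fun (E.ds_succ 3 3 (by omega)) z
    have t2 := AlgHom.congr_fun (E.ds_gt 2 4 2 (by omega) (by omega)) z
    have t3 := AlgHom.congr_fun (E.ds_gt 2 4 1 (by omega) (by omega)) z
    have t4 := AlgHom.congr_fun (E.ds_gt 2 4 0 (by omega) (by omega)) z
    have u1 := AlgHom.congr_fun (E.ds_succ 3 3 (by omega)) a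
    simp only [AlgHom.comp_apply, AlgHom.id_apply] at t1 t2 t3 t4 u1
    rw [hwdef, map_mul, map_sub, map_add, map_sub, t1, t2, t3, t4, u1]
    norm_num [hz3]
  have : a * z = 0 := by rw [← hd4, hw, map_zero]
  exact this
end

section
/- Let E be a simplicial commutative k-algebra whose Moore complex satisfies NE_4 = 0. Then for all x_1 ∈ NE_1 and y_3 ∈ NE_3 the following identity holds in E_3: (s_2 s_0 x_1 − s_2 s_1 x_1) · (s_1 d_3 y_3 − s_2 d_3 y_3 + y_3) = 0. -/
theorem stmt_7 {k : Type*} [CommRing k] {obj : ℕ → Type*}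
    [∀ n, CommRing (obj n)] [∀ n, Algebra k (obj n)]
    (E : SimplicialCommAlg k obj)
    (hNE4 : ∀ w : obj 4, E.d 3 0 w = 0 → E.d 3 1 w = 0 →
      E.d 3 2 w = 0 → E.d 3 3 w = 0 → w = 0)
    (x1 : obj 1) (hx1 : E.d 0 0 x1 = 0) (y3 : obj 3) (hy3 : E.d 2 0 y3 = 0 ∧ E.d 2 1 y3 = 0 ∧ E.d 2 2 y3 = 0) :
    (E.s 2 2 (E.s 1 0 x1) - E.s 2 2 (E.s 1 1 x1)) *
      (E.s 2 1 (E.d 2 3 y3) - E.s 2 2 (E.d 2 3 y3) + y3) = 0 := by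
  obtain ⟨hy0, hy1, hy2⟩ := hy3
  have hlt : ∀ (m i j : ℕ), i < j → j ≤ m + 1 → ∀ a : obj (m + 1),
      E.d (m + 1) i (E.s (m + 1) j a) = E.s m (j - 1) (E.d m i a) :=
    fun m i j h1 h2 a => AlgHom.congr_fun (E.ds_lt m i j h1 h2) a
  have hself : ∀ (n j : ℕ), j ≤ n → ∀ a : obj n,
      E.d n j (E.s n j a) = a :=
    fun n j h a => AlgHom.congr_fun (E.ds_self n j h) a
  have hsucc : ∀ (n j : ℕ), j ≤ n → ∀ a : obj n,
      E.d n (j + 1) (E.s n j a) = a :=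
    fun n j h a => AlgHom.congr_fun (E.ds_succ n j h) a
  have hgt : ∀ (m i j : ℕ), j + 1 < i → i ≤ m + 2 → ∀ a : obj (m + 1),
      E.d (m + 1) i (E.s (m + 1) j a) = E.s m j (E.d m (i - 1) a) :=
    fun m i j h1 h2 a => AlgHom.congr_fun (E.ds_gt m i j h1 h2) a
  -- specific instances
  have h301 : ∀ a, E.d 3 0 (E.s 3 1 a) = E.s 2 0 (E.d 2 0 a) := hlt 2 0 1 (by norm_num) (by norm_num)
  have h302 : ∀ a, E.d 3 0 (E.s 3 2 a) = E.s 2 1 (E.d 2 0 a) := hlt 2 0 2 (by norm_num) (by norm_num)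
  have h303 : ∀ a, E.d 3 0 (E.s 3 3 a) = E.s 2 2 (E.d 2 0 a) := hlt 2 0 3 (by norm_num) (by norm_num)
  have h311 : ∀ a, E.d 3 1 (E.s 3 1 a) = a := hself 3 1 (by norm_num)
  have h312 : ∀ a, E.d 3 1 (E.s 3 2 a) = E.s 2 1 (E.d 2 1 a) := hlt 2 1 2 (by norm_num) (by norm_num)
  have h313 : ∀ a, E.d 3 1 (E.s 3 3 a) = E.s 2 2 (E.d 2 1 a) := hlt 2 1 3 (by norm_num) (by norm_num)
  have h321 : ∀ a, E.d 3 2 (E.s 3 1 a) = a := hsucc 3 1 (by norm_num)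
  have h322 : ∀ a, E.d 3 2 (E.s 3 2 a) = a := hself 3 2 (by norm_num)
  have h323 : ∀ a, E.d 3 2 (E.s 3 3 a) = E.s 2 2 (E.d 2 2 a) := hlt 2 2 3 (by norm_num) (by norm_num)
  have h331 : ∀ a, E.d 3 3 (E.s 3 1 a) = E.s 2 1 (E.d 2 2 a) := hgt 2 3 1 (by norm_num) (by norm_num)
  have h332 : ∀ a, E.d 3 3 (E.s 3 2 a) = a := hsucc 3 2 (by norm_num)
  have h333 : ∀ a, E.d 3 3 (E.s 3 3 a) = a := hself 3 3 (by norm_num)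
  have h341 : ∀ a, E.d 3 4 (E.s 3 1 a) = E.s 2 1 (E.d 2 3 a) := hgt 2 4 1 (by norm_num) (by norm_num)
  have h342 : ∀ a, E.d 3 4 (E.s 3 2 a) = E.s 2 2 (E.d 2 3 a) := hgt 2 4 2 (by norm_num) (by norm_num)
  have h343 : ∀ a, E.d 3 4 (E.s 3 3 a) = a := hsucc 3 3 (by norm_num)
  have h202 : ∀ a, E.d 2 0 (E.s 2 2 a) = E.s 1 1 (E.d 1 0 a) := hlt 1 0 2 (by norm_num) (by norm_num)
  have h212 : ∀ a, E.d 2 1 (E.s 2 2 a) = E.s 1 1 (E.d 1 1 a) := hlt 1 1 2 (by norm_num) (by norm_num)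
  have h222 : ∀ a, E.d 2 2 (E.s 2 2 a) = a := hself 2 2 (by norm_num)
  have h232 : ∀ a, E.d 2 3 (E.s 2 2 a) = a := hsucc 2 2 (by norm_num)
  have h100 : ∀ a, E.d 1 0 (E.s 1 0 a) = a := hself 1 0 (by norm_num)
  have h101 : ∀ a, E.d 1 0 (E.s 1 1 a) = E.s 0 0 (E.d 0 0 a) := hlt 0 0 1 (by norm_num) (by norm_num)
  have h110 : ∀ a, E.d 1 1 (E.s 1 0 a) = a := hsucc 1 0 (by norm_num)
  have h111 : ∀ a, E.d 1 1 (E.s 1 1 a) = a := hself 1 1 (by norm_num)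
  set P : obj 4 := E.s 3 3 (E.s 2 2 (E.s 1 0 x1)) - E.s 3 3 (E.s 2 2 (E.s 1 1 x1)) with hP
  set Q : obj 4 := E.s 3 1 y3 - E.s 3 2 y3 + E.s 3 3 y3 with hQ
  have hw : P * Q = 0 := by
    apply hNE4
    · simp only [map_mul, map_sub, map_add, hP, hQ, h301, h302, h303, h202, h100, h101,
        hx1, hy0, map_zero, map_sub, map_add]
      ring
    · simp only [map_mul, map_sub, map_add, hP, hQ, h311, h312, h313, h212, h110, h111,
        hy1, map_zero]
      ring
    · simp only [map_mul, map_sub, map_add, hP, hQ, h321, h322, h323, h222, hy2, map_zero]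
      ring
    · simp only [map_mul, map_sub, map_add, hP, hQ, h331, h332, h333, hy2, map_zero]
      ring
  have hd4 : E.d 3 4 (P * Q) =
      (E.s 2 2 (E.s 1 0 x1) - E.s 2 2 (E.s 1 1 x1)) *
        (E.s 2 1 (E.d 2 3 y3) - E.s 2 2 (E.d 2 3 y3) + y3) := by
    simp only [map_mul, map_sub, map_add, hP, hQ, h341, h342, h343]
  rw [← hd4, hw, map_zero]
end

section
/- Let E be a simplicial commutative k-algebra whose Moore complex satisfies NE_4 = 0. Then for all x_1 ∈ NE_1 and y_3 ∈ NE_3 the following identity holds in E_3: (s_1 s_0 x_1 − s_2 s_0 x_1) · (s_2 d_3 y_3 − y_3) = 0. -/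
theorem stmt_8 {k : Type*} [CommRing k] {obj : ℕ → Type*}
    [∀ n, CommRing (obj n)] [∀ n, Algebra k (obj n)]
    (E : SimplicialCommAlg k obj)
    (hNE4 : ∀ w : obj 4, E.d 3 0 w = 0 → E.d 3 1 w = 0 →
      E.d 3 2 w = 0 → E.d 3 3 w = 0 → w = 0)
    (x1 : obj 1) (hx1 : E.d 0 0 x1 = 0) (y3 : obj 3) (hy3 : E.d 2 0 y3 = 0 ∧ E.d 2 1 y3 = 0 ∧ E.d 2 2 y3 = 0) :
    (E.s 2 1 (E.s 1 0 x1) - E.s 2 2 (E.s 1 0 x1)) * (E.s 2 2 (E.d 2 3 y3) - y3) = 0 := by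
  obtain ⟨hy0, hy1, hy2⟩ := hy3
  have L02 : ∀ z, E.d 3 0 (E.s 3 2 z) = E.s 2 1 (E.d 2 0 z) :=
    fun z => AlgHom.congr_fun (E.ds_lt 2 0 2 (by omega) (by omega)) z
  have L03 : ∀ z, E.d 3 0 (E.s 3 3 z) = E.s 2 2 (E.d 2 0 z) :=
    fun z => AlgHom.congr_fun (E.ds_lt 2 0 3 (by omega) (by omega)) z
  have L12 : ∀ z, E.d 3 1 (E.s 3 2 z) = E.s 2 1 (E.d 2 1 z) :=
    fun z => AlgHom.congr_fun (E.ds_lt 2 1 2 (by omega) (by omega)) z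
  have L13 : ∀ z, E.d 3 1 (E.s 3 3 z) = E.s 2 2 (E.d 2 1 z) :=
    fun z => AlgHom.congr_fun (E.ds_lt 2 1 3 (by omega) (by omega)) z
  have L23 : ∀ z, E.d 3 2 (E.s 3 3 z) = E.s 2 2 (E.d 2 2 z) :=
    fun z => AlgHom.congr_fun (E.ds_lt 2 2 3 (by omega) (by omega)) z
  have S21 : ∀ z, E.d 2 2 (E.s 2 1 z) = z :=
    fun z => by simpa using AlgHom.congr_fun (E.ds_succ 2 1 (by omega)) z
  have S22 : ∀ z, E.d 2 2 (E.s 2 2 z) = z :=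
    fun z => by simpa using AlgHom.congr_fun (E.ds_self 2 2 (by omega)) z
  have S33 : ∀ z, E.d 3 3 (E.s 3 3 z) = z :=
    fun z => by simpa using AlgHom.congr_fun (E.ds_self 3 3 (by omega)) z
  have S32 : ∀ z, E.d 3 3 (E.s 3 2 z) = z :=
    fun z => by simpa using AlgHom.congr_fun (E.ds_succ 3 2 (by omega)) z
  have S43 : ∀ z, E.d 3 4 (E.s 3 3 z) = z :=
    fun z => by simpa using AlgHom.congr_fun (E.ds_succ 3 3 (by omega)) z
  have G42 : ∀ z, E.d 3 4 (E.s 3 2 z) = E.s 2 2 (E.d 2 3 z) :=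
    fun z => AlgHom.congr_fun (E.ds_gt 2 4 2 (by omega) (by omega)) z
  set w : obj 4 := (E.s 3 3 (E.s 2 1 (E.s 1 0 x1)) - E.s 3 3 (E.s 2 2 (E.s 1 0 x1))) *
      (E.s 3 2 y3 - E.s 3 3 y3) with hw
  have hw0 : w = 0 := by
    apply hNE4
    · rw [hw]
      simp only [map_mul, map_sub, L02, L03, hy0, map_zero, sub_zero, mul_zero]
    · rw [hw]
      simp only [map_mul, map_sub, L12, L13, hy1, map_zero, sub_zero, mul_zero]
    · rw [hw]
      simp only [map_mul, map_sub, L23, S21, S22, sub_self, zero_mul]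
    · rw [hw]
      simp only [map_mul, map_sub, S33, S32, sub_self, mul_zero]
  have h4 := congrArg (E.d 3 4) hw0
  rw [hw] at h4
  simp only [map_mul, map_sub, S43, G42, map_zero] at h4
  exact h4
end

section
/- Let E be a simplicial commutative k-algebra whose Moore complex satisfies NE_4 = 0. Then for all x_2, y_2 ∈ NE_2 the following identity holds in E_3: (s_1 x_2 − s_0 x_2 + s_2 s_0 (d_2 x_2) − s_2 s_1 (d_2 x_2)) · (s_1 y_2 − s_2 y_2) = 0. -/
theorem stmt_10 {k : Type*} [CommRing k] {obj : ℕ → Type*}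
    [∀ n, CommRing (obj n)] [∀ n, Algebra k (obj n)]
    (E : SimplicialCommAlg k obj)
    (hNE4 : ∀ w : obj 4, E.d 3 0 w = 0 → E.d 3 1 w = 0 →
      E.d 3 2 w = 0 → E.d 3 3 w = 0 → w = 0)
    (x2 : obj 2) (hx2 : E.d 1 0 x2 = 0 ∧ E.d 1 1 x2 = 0) (y2 : obj 2) (hy2 : E.d 1 0 y2 = 0 ∧ E.d 1 1 y2 = 0) :
    (E.s 2 1 x2 - E.s 2 0 x2 + E.s 2 2 (E.s 1 0 (E.d 1 2 x2)) -
        E.s 2 2 (E.s 1 1 (E.d 1 2 x2))) * (E.s 2 1 y2 - E.s 2 2 y2) = 0 := by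
  obtain ⟨hx0, hx1⟩ := hx2
  obtain ⟨hy0, _⟩ := hy2
  set t := E.d 1 2 x2 with ht
  set A := E.s 2 1 x2 - E.s 2 0 x2 + E.s 2 2 (E.s 1 0 t) - E.s 2 2 (E.s 1 1 t) with hA
  set B := E.s 2 1 y2 - E.s 2 2 y2 with hB
  -- pointwise simplicial identities on obj 2 → obj 1 level compositions
  have d21s21 : ∀ z : obj 2, E.d 2 1 (E.s 2 1 z) = z := fun z =>
    AlgHom.congr_fun (E.ds_self 2 1 (by norm_num)) z
  have d21s20 : ∀ z : obj 2, E.d 2 1 (E.s 2 0 z) = z := fun z =>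
    AlgHom.congr_fun (E.ds_succ 2 0 (by norm_num)) z
  have d21s22 : ∀ z : obj 2, E.d 2 1 (E.s 2 2 z) = E.s 1 1 (E.d 1 1 z) := fun z => by
    simpa using AlgHom.congr_fun (E.ds_lt 1 1 2 (by norm_num) (by norm_num)) z
  have d11s10 : ∀ z : obj 1, E.d 1 1 (E.s 1 0 z) = z := fun z =>
    AlgHom.congr_fun (E.ds_succ 1 0 (by norm_num)) z
  have d11s11 : ∀ z : obj 1, E.d 1 1 (E.s 1 1 z) = z := fun z =>
    AlgHom.congr_fun (E.ds_self 1 1 (by norm_num)) z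
  have d20s21 : ∀ z : obj 2, E.d 2 0 (E.s 2 1 z) = E.s 1 0 (E.d 1 0 z) := fun z => by
    simpa using AlgHom.congr_fun (E.ds_lt 1 0 1 (by norm_num) (by norm_num)) z
  have d20s22 : ∀ z : obj 2, E.d 2 0 (E.s 2 2 z) = E.s 1 1 (E.d 1 0 z) := fun z => by
    simpa using AlgHom.congr_fun (E.ds_lt 1 0 2 (by norm_num) (by norm_num)) z
  have d22s21 : ∀ z : obj 2, E.d 2 2 (E.s 2 1 z) = z := fun z =>
    AlgHom.congr_fun (E.ds_succ 2 1 (by norm_num)) z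
  have d22s22 : ∀ z : obj 2, E.d 2 2 (E.s 2 2 z) = z := fun z =>
    AlgHom.congr_fun (E.ds_self 2 2 (by norm_num)) z
  -- faces of A and B
  have hA1 : E.d 2 1 A = 0 := by
    rw [hA]
    simp only [map_sub, map_add, d21s21, d21s20, d21s22, d11s10, d11s11]
    ring
  have hB0 : E.d 2 0 B = 0 := by
    rw [hB]
    simp only [map_sub, d20s21, d20s22, hy0, map_zero]
    ring
  have hB2 : E.d 2 2 B = 0 := by
    rw [hB]
    simp only [map_sub, d22s21, d22s22]
    ring
  -- compositions on obj 4 → obj 3 level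
  have d30s33 : ∀ z : obj 3, E.d 3 0 (E.s 3 3 z) = E.s 2 2 (E.d 2 0 z) := fun z => by
    simpa using AlgHom.congr_fun (E.ds_lt 2 0 3 (by norm_num) (by norm_num)) z
  have d31s33 : ∀ z : obj 3, E.d 3 1 (E.s 3 3 z) = E.s 2 2 (E.d 2 1 z) := fun z => by
    simpa using AlgHom.congr_fun (E.ds_lt 2 1 3 (by norm_num) (by norm_num)) z
  have d32s33 : ∀ z : obj 3, E.d 3 2 (E.s 3 3 z) = E.s 2 2 (E.d 2 2 z) := fun z => by
    simpa using AlgHom.congr_fun (E.ds_lt 2 2 3 (by norm_num) (by norm_num)) z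
  have d33s33 : ∀ z : obj 3, E.d 3 3 (E.s 3 3 z) = z := fun z =>
    AlgHom.congr_fun (E.ds_self 3 3 (by norm_num)) z
  have d34s33 : ∀ z : obj 3, E.d 3 4 (E.s 3 3 z) = z := fun z =>
    AlgHom.congr_fun (E.ds_succ 3 3 (by norm_num)) z
  have d31s32 : ∀ z : obj 3, E.d 3 1 (E.s 3 2 z) = E.s 2 1 (E.d 2 1 z) := fun z => by
    simpa using AlgHom.congr_fun (E.ds_lt 2 1 2 (by norm_num) (by norm_num)) z
  have d33s32 : ∀ z : obj 3, E.d 3 3 (E.s 3 2 z) = z := fun z =>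
    AlgHom.congr_fun (E.ds_succ 3 2 (by norm_num)) z
  have d34s32 : ∀ z : obj 3, E.d 3 4 (E.s 3 2 z) = E.s 2 2 (E.d 2 3 z) := fun z => by
    simpa using AlgHom.congr_fun (E.ds_gt 2 4 2 (by norm_num) (by norm_num)) z
  -- the element w ∈ obj 4
  set u := E.s 3 3 A - E.s 3 2 A with hu
  set v := E.s 3 3 B with hv
  have h0 : E.d 3 0 (u * v) = 0 := by
    rw [map_mul, hv, d30s33, hB0, map_zero, mul_zero]
  have h1 : E.d 3 1 (u * v) = 0 := by
    rw [map_mul, hu, map_sub, d31s33, d31s32, hA1, map_zero, map_zero, sub_zero, zero_mul]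
  have h2 : E.d 3 2 (u * v) = 0 := by
    rw [map_mul, hv, d32s33, hB2, map_zero, mul_zero]
  have h3 : E.d 3 3 (u * v) = 0 := by
    rw [map_mul, hu, map_sub, d33s33, d33s32, sub_self, zero_mul]
  have hw : u * v = 0 := hNE4 _ h0 h1 h2 h3
  have hu4 : E.d 3 4 u = A := by
    rw [hu, map_sub, d34s33, d34s32]
    -- d 2 3 A = 0
    have d23s21 : ∀ z : obj 2, E.d 2 3 (E.s 2 1 z) = E.s 1 1 (E.d 1 2 z) := fun z => by
      simpa using AlgHom.congr_fun (E.ds_gt 1 3 1 (by norm_num) (by norm_num)) z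
    have d23s20 : ∀ z : obj 2, E.d 2 3 (E.s 2 0 z) = E.s 1 0 (E.d 1 2 z) := fun z => by
      simpa using AlgHom.congr_fun (E.ds_gt 1 3 0 (by norm_num) (by norm_num)) z
    have d23s22 : ∀ z : obj 2, E.d 2 3 (E.s 2 2 z) = z := fun z =>
      AlgHom.congr_fun (E.ds_succ 2 2 (by norm_num)) z
    have : E.d 2 3 A = 0 := by
      rw [hA]
      simp only [map_sub, map_add, d23s21, d23s20, d23s22]
      ring
    rw [this, map_zero, sub_zero]
  have hv4 : E.d 3 4 v = B := by rw [hv, d34s33]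
  calc A * B = E.d 3 4 u * E.d 3 4 v := by rw [hu4, hv4]
    _ = E.d 3 4 (u * v) := (map_mul _ _ _).symm
    _ = 0 := by rw [hw, map_zero]
end

section
/- Let E be a simplicial commutative k-algebra whose Moore complex satisfies NE_4 = 0. Then for all x_2, y_2 ∈ NE_2 the following identity holds in E_3: (s_2 s_1 (d_2 x_2) − s_1 x_2) · (s_0 y_2 − s_1 y_2 + s_2 y_2) = 0. -/
theorem stmt_11 {k : Type*} [CommRing k] {obj : ℕ → Type*}
    [∀ n, CommRing (obj n)] [∀ n, Algebra k (obj n)]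
    (E : SimplicialCommAlg k obj)
    (hNE4 : ∀ w : obj 4, E.d 3 0 w = 0 → E.d 3 1 w = 0 →
      E.d 3 2 w = 0 → E.d 3 3 w = 0 → w = 0)
    (x2 : obj 2) (hx2 : E.d 1 0 x2 = 0 ∧ E.d 1 1 x2 = 0) (y2 : obj 2) (hy2 : E.d 1 0 y2 = 0 ∧ E.d 1 1 y2 = 0) :
    (E.s 2 2 (E.s 1 1 (E.d 1 2 x2)) - E.s 2 1 x2) *
      (E.s 2 0 y2 - E.s 2 1 y2 + E.s 2 2 y2) = 0 := by
  obtain ⟨hx0, hx1⟩ := hx2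
  obtain ⟨hy0, hy1⟩ := hy2
  -- pointwise simplicial identities
  have e1 : ∀ z : obj 3, E.d 3 0 (E.s 3 2 z) = E.s 2 1 (E.d 2 0 z) := fun z =>
    AlgHom.congr_fun (E.ds_lt 2 0 2 (by norm_num) (by norm_num)) z
  have e2 : ∀ z : obj 3, E.d 3 0 (E.s 3 3 z) = E.s 2 2 (E.d 2 0 z) := fun z =>
    AlgHom.congr_fun (E.ds_lt 2 0 3 (by norm_num) (by norm_num)) z
  have e3 : E.d 2 0 (E.s 2 1 x2) = E.s 1 0 (E.d 1 0 x2) :=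
    AlgHom.congr_fun (E.ds_lt 1 0 1 (by norm_num) (by norm_num)) x2
  have e4 : ∀ z : obj 3, E.d 3 3 (E.s 3 2 z) = z := fun z =>
    AlgHom.congr_fun (E.ds_succ 3 2 (by norm_num)) z
  have e5 : ∀ z : obj 3, E.d 3 3 (E.s 3 3 z) = z := fun z =>
    AlgHom.congr_fun (E.ds_self 3 3 (by norm_num)) z
  have e6 : ∀ z : obj 3, E.d 3 1 (E.s 3 3 z) = E.s 2 2 (E.d 2 1 z) := fun z =>
    AlgHom.congr_fun (E.ds_lt 2 1 3 (by norm_num) (by norm_num)) z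
  have e7 : ∀ z : obj 3, E.d 3 2 (E.s 3 3 z) = E.s 2 2 (E.d 2 2 z) := fun z =>
    AlgHom.congr_fun (E.ds_lt 2 2 3 (by norm_num) (by norm_num)) z
  have e8 : E.d 2 1 (E.s 2 0 y2) = y2 :=
    AlgHom.congr_fun (E.ds_succ 2 0 (by norm_num)) y2
  have e9 : E.d 2 1 (E.s 2 1 y2) = y2 :=
    AlgHom.congr_fun (E.ds_self 2 1 (by norm_num)) y2
  have e10 : E.d 2 1 (E.s 2 2 y2) = E.s 1 1 (E.d 1 1 y2) :=
    AlgHom.congr_fun (E.ds_lt 1 1 2 (by norm_num) (by norm_num)) y2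
  have e11 : E.d 2 2 (E.s 2 0 y2) = E.s 1 0 (E.d 1 1 y2) :=
    AlgHom.congr_fun (E.ds_gt 1 2 0 (by norm_num) (by norm_num)) y2
  have e12 : E.d 2 2 (E.s 2 1 y2) = y2 :=
    AlgHom.congr_fun (E.ds_succ 2 1 (by norm_num)) y2
  have e13 : E.d 2 2 (E.s 2 2 y2) = y2 :=
    AlgHom.congr_fun (E.ds_self 2 2 (by norm_num)) y2
  have e14 : ∀ z : obj 3, E.d 3 4 (E.s 3 3 z) = z := fun z =>
    AlgHom.congr_fun (E.ds_succ 3 3 (by norm_num)) z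
  have e15 : ∀ z : obj 3, E.d 3 4 (E.s 3 2 z) = E.s 2 2 (E.d 2 3 z) := fun z =>
    AlgHom.congr_fun (E.ds_gt 2 4 2 (by norm_num) (by norm_num)) z
  have e16 : E.d 2 3 (E.s 2 1 x2) = E.s 1 1 (E.d 1 2 x2) :=
    AlgHom.congr_fun (E.ds_gt 1 3 1 (by norm_num) (by norm_num)) x2
  set A : obj 4 := E.s 3 2 (E.s 2 1 x2) - E.s 3 3 (E.s 2 1 x2) with hAdef
  set B : obj 4 := E.s 3 3 (E.s 2 0 y2 - E.s 2 1 y2 + E.s 2 2 y2) with hBdef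
  have hA0 : E.d 3 0 A = 0 := by
    rw [hAdef, map_sub, e1, e2, e3, hx0, map_zero, map_zero, map_zero, sub_zero]
  have hA3 : E.d 3 3 A = 0 := by
    rw [hAdef, map_sub, e4, e5, sub_self]
  have hb1 : E.d 2 1 (E.s 2 0 y2 - E.s 2 1 y2 + E.s 2 2 y2) = 0 := by
    rw [map_add, map_sub, e8, e9, e10, hy1, map_zero, sub_self, zero_add]
  have hb2 : E.d 2 2 (E.s 2 0 y2 - E.s 2 1 y2 + E.s 2 2 y2) = 0 := by
    rw [map_add, map_sub, e11, e12, e13, hy1, map_zero, zero_sub, neg_add_cancel]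
  have hB1 : E.d 3 1 B = 0 := by rw [hBdef, e6, hb1, map_zero]
  have hB2 : E.d 3 2 B = 0 := by rw [hBdef, e7, hb2, map_zero]
  have hw : A * B = 0 := by
    apply hNE4
    · rw [map_mul, hA0, zero_mul]
    · rw [map_mul, hB1, mul_zero]
    · rw [map_mul, hB2, mul_zero]
    · rw [map_mul, hA3, zero_mul]
  have hdA : E.d 3 4 A = E.s 2 2 (E.s 1 1 (E.d 1 2 x2)) - E.s 2 1 x2 := by
    rw [hAdef, map_sub, e15, e16, e14]
  have hdB : E.d 3 4 B = E.s 2 0 y2 - E.s 2 1 y2 + E.s 2 2 y2 := by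
    rw [hBdef, e14]
  calc (E.s 2 2 (E.s 1 1 (E.d 1 2 x2)) - E.s 2 1 x2) *
      (E.s 2 0 y2 - E.s 2 1 y2 + E.s 2 2 y2)
      = E.d 3 4 A * E.d 3 4 B := by rw [hdA, hdB]
    _ = E.d 3 4 (A * B) := (map_mul _ _ _).symm
    _ = 0 := by rw [hw, map_zero]
end

section
/- Let E be a simplicial commutative k-algebra whose Moore complex satisfies NE_4 = 0. Then for all x_2 ∈ NE_2 and y_3 ∈ NE_3 the following identity holds in E_3: (s_2 s_1 (d_2 x_2) − s_1 x_2) · y_3 = 0. -/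
theorem stmt_13 {k : Type*} [CommRing k] {obj : ℕ → Type*}
    [∀ n, CommRing (obj n)] [∀ n, Algebra k (obj n)]
    (E : SimplicialCommAlg k obj)
    (hNE4 : ∀ w : obj 4, E.d 3 0 w = 0 → E.d 3 1 w = 0 →
      E.d 3 2 w = 0 → E.d 3 3 w = 0 → w = 0)
    (x2 : obj 2) (hx2 : E.d 1 0 x2 = 0 ∧ E.d 1 1 x2 = 0) (y3 : obj 3) (hy3 : E.d 2 0 y3 = 0 ∧ E.d 2 1 y3 = 0 ∧ E.d 2 2 y3 = 0) :
    (E.s 2 2 (E.s 1 1 (E.d 1 2 x2)) - E.s 2 1 x2) * y3 = 0 := by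
  obtain ⟨hy0, hy1, hy2⟩ := hy3
  set z : obj 4 := E.s 3 2 (E.s 2 1 x2) - E.s 3 3 (E.s 2 1 x2) with hz
  set w : obj 4 := z * E.s 3 3 y3 with hw
  have hs3 : ∀ i : ℕ, i < 3 → E.d 3 i (E.s 3 3 y3) = 0 := by
    intro i hi
    have := AlgHom.congr_fun (E.ds_lt 2 i 3 hi (by omega)) y3
    simp only [AlgHom.comp_apply] at this
    rw [this]
    interval_cases i
    · rw [hy0, map_zero]
    · rw [hy1, map_zero]
    · rw [hy2, map_zero]
  have hw0 : E.d 3 0 w = 0 := by rw [hw, map_mul, hs3 0 (by omega), mul_zero]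
  have hw1 : E.d 3 1 w = 0 := by rw [hw, map_mul, hs3 1 (by omega), mul_zero]
  have hw2 : E.d 3 2 w = 0 := by rw [hw, map_mul, hs3 2 (by omega), mul_zero]
  have hd3z : E.d 3 3 z = 0 := by
    have h1 := AlgHom.congr_fun (E.ds_succ 3 2 (by omega)) (E.s 2 1 x2)
    have h2 := AlgHom.congr_fun (E.ds_self 3 3 (by omega)) (E.s 2 1 x2)
    simp only [AlgHom.comp_apply, AlgHom.id_apply] at h1 h2
    rw [hz, map_sub, h1, h2, sub_self]
  have hw3 : E.d 3 3 w = 0 := by rw [hw, map_mul, hd3z, zero_mul]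
  have hwz : w = 0 := hNE4 w hw0 hw1 hw2 hw3
  have hd4z : E.d 3 4 z = E.s 2 2 (E.s 1 1 (E.d 1 2 x2)) - E.s 2 1 x2 := by
    have h1 := AlgHom.congr_fun (E.ds_gt 2 4 2 (by omega) (by omega)) (E.s 2 1 x2)
    have h2 := AlgHom.congr_fun (E.ds_succ 3 3 (by omega)) (E.s 2 1 x2)
    have h3 := AlgHom.congr_fun (E.ds_gt 1 3 1 (by omega) (by omega)) x2
    simp only [AlgHom.comp_apply, AlgHom.id_apply] at h1 h2 h3
    rw [hz, map_sub, h1, h2]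
    norm_num at h3 ⊢
    rw [h3]
  have hd4s : E.d 3 4 (E.s 3 3 y3) = y3 := by
    have := AlgHom.congr_fun (E.ds_succ 3 3 (by omega)) y3
    simpa using this
  have := congrArg (E.d 3 4) hwz
  rw [hw, map_mul, map_zero, hd4z, hd4s] at this
  exact this
end

section
/- Let E be a simplicial commutative k-algebra whose Moore complex satisfies NE_4 = 0. Then for all x_3, y_3 ∈ NE_3 the following identity holds in E_3: x_3 · (s_2 d_3 y_3 − y_3) = 0. Equivalently, with the action of x_2 ∈ NE_2 on NE_3 defined by x_2 · x_3 = s_2(x_2) x_3, the restriction ∂_3 = d_3 : NE_3 → NE_2 satisfies the Peiffer identity ∂_3(x_3) · y_3 = x_3 y_3, so (NE_3, NE_2, ∂_3) is a crossed module. -/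
lemma peiffer_aux {k : Type*} [CommRing k] {obj : ℕ → Type*}
    [∀ n, CommRing (obj n)] [∀ n, Algebra k (obj n)]
    (E : SimplicialCommAlg k obj)
    (hNE4 : ∀ w : obj 4, E.d 3 0 w = 0 → E.d 3 1 w = 0 →
      E.d 3 2 w = 0 → E.d 3 3 w = 0 → w = 0)
    (x3 : obj 3) (hx3 : E.d 2 0 x3 = 0 ∧ E.d 2 1 x3 = 0 ∧ E.d 2 2 x3 = 0)
    (y3 : obj 3) (hy3 : E.d 2 0 y3 = 0 ∧ E.d 2 1 y3 = 0 ∧ E.d 2 2 y3 = 0) :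
    x3 * (E.s 2 2 (E.d 2 3 y3) - y3) = 0 := by
  obtain ⟨hx0, hx1, hx2⟩ := hx3
  obtain ⟨hy0, hy1, hy2⟩ := hy3
  have e33 : ∀ i, i < 3 → ∀ a, E.d 3 i (E.s 3 3 a) = E.s 2 2 (E.d 2 i a) :=
    fun i hi a => AlgHom.congr_fun (E.ds_lt 2 i 3 hi (by norm_num)) a
  have e32 : ∀ i, i < 2 → ∀ a, E.d 3 i (E.s 3 2 a) = E.s 2 1 (E.d 2 i a) :=
    fun i hi a => AlgHom.congr_fun (E.ds_lt 2 i 2 hi (by norm_num)) a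
  have e33self : ∀ a, E.d 3 3 (E.s 3 3 a) = a :=
    fun a => AlgHom.congr_fun (E.ds_self 3 3 le_rfl) a
  have e33succ : ∀ a, E.d 3 4 (E.s 3 3 a) = a :=
    fun a => AlgHom.congr_fun (E.ds_succ 3 3 le_rfl) a
  have e32self : ∀ a, E.d 3 2 (E.s 3 2 a) = a :=
    fun a => AlgHom.congr_fun (E.ds_self 3 2 (by norm_num)) a
  have e32succ : ∀ a, E.d 3 3 (E.s 3 2 a) = a :=
    fun a => AlgHom.congr_fun (E.ds_succ 3 2 (by norm_num)) a
  have e32gt : ∀ a, E.d 3 4 (E.s 3 2 a) = E.s 2 2 (E.d 2 3 a) :=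
    fun a => AlgHom.congr_fun (E.ds_gt 2 4 2 (by norm_num) (by norm_num)) a
  set w : obj 4 := E.s 3 3 x3 * (E.s 3 3 y3 - E.s 3 2 y3) with hwdef
  have hw : w = 0 := by
    apply hNE4
    · rw [hwdef, map_mul, e33 0 (by norm_num), hx0, map_zero, zero_mul]
    · rw [hwdef, map_mul, e33 1 (by norm_num), hx1, map_zero, zero_mul]
    · rw [hwdef, map_mul, e33 2 (by norm_num), hx2, map_zero, zero_mul]
    · rw [hwdef, map_mul, map_sub, e33self, e33self, e32succ, sub_self, mul_zero]
  have h4 := congrArg (E.d 3 4) hw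
  rw [hwdef, map_mul, map_sub, e33succ, e33succ, e32gt, map_zero] at h4
  linear_combination -h4

theorem stmt_14 {k : Type*} [CommRing k] {obj : ℕ → Type*}
    [∀ n, CommRing (obj n)] [∀ n, Algebra k (obj n)]
    (E : SimplicialCommAlg k obj)
    (hNE4 : ∀ w : obj 4, E.d 3 0 w = 0 → E.d 3 1 w = 0 →
      E.d 3 2 w = 0 → E.d 3 3 w = 0 → w = 0)
    (x3 : obj 3) (hx3 : E.d 2 0 x3 = 0 ∧ E.d 2 1 x3 = 0 ∧ E.d 2 2 x3 = 0) (y3 : obj 3) (hy3 : E.d 2 0 y3 = 0 ∧ E.d 2 1 y3 = 0 ∧ E.d 2 2 y3 = 0) :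
    x3 * (E.s 2 2 (E.d 2 3 y3) - y3) = 0 ∧ E.s 2 2 (E.d 2 3 x3) * y3 = x3 * y3 := by
  refine ⟨peiffer_aux E hNE4 x3 hx3 y3 hy3, ?_⟩
  have h := peiffer_aux E hNE4 y3 hy3 x3 hx3
  linear_combination h
end

section
/- Let E be a simplicial commutative k-algebra whose Moore complex satisfies NE_4 = 0. Then for all x_3, y_3 ∈ NE_3 the following identity holds in E_3: (s_2 d_3 x_3 − x_3) · (s_1 d_3 y_3 − s_2 d_3 y_3 + y_3) = 0. -/
theorem stmt_15 {k : Type*} [CommRing k] {obj : ℕ → Type*}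
    [∀ n, CommRing (obj n)] [∀ n, Algebra k (obj n)]
    (E : SimplicialCommAlg k obj)
    (hNE4 : ∀ w : obj 4, E.d 3 0 w = 0 → E.d 3 1 w = 0 →
      E.d 3 2 w = 0 → E.d 3 3 w = 0 → w = 0)
    (x3 : obj 3) (hx3 : E.d 2 0 x3 = 0 ∧ E.d 2 1 x3 = 0 ∧ E.d 2 2 x3 = 0) (y3 : obj 3) (hy3 : E.d 2 0 y3 = 0 ∧ E.d 2 1 y3 = 0 ∧ E.d 2 2 y3 = 0) :
    (E.s 2 2 (E.d 2 3 x3) - x3) *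
      (E.s 2 1 (E.d 2 3 y3) - E.s 2 2 (E.d 2 3 y3) + y3) = 0 := by
  obtain ⟨hx0, hx1, hx2⟩ := hx3
  obtain ⟨hy0, hy1, hy2⟩ := hy3
  -- pointwise simplicial identities on E_3
  have lt := fun i j h1 h2 z => AlgHom.congr_fun (E.ds_lt 2 i j h1 h2) z
  have self := fun j h z => AlgHom.congr_fun (E.ds_self 3 j h) z
  have succ := fun j h z => AlgHom.congr_fun (E.ds_succ 3 j h) z
  have gt := fun i j h1 h2 z => AlgHom.congr_fun (E.ds_gt 2 i j h1 h2) z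
  simp only [AlgHom.comp_apply, AlgHom.id_apply] at lt self succ gt
  set a : obj 4 := E.s 3 3 x3 - E.s 3 2 x3 with ha
  set b : obj 4 := - E.s 3 1 y3 + E.s 3 2 y3 - E.s 3 3 y3 with hb
  have da0 : E.d 3 0 a = 0 := by
    simp only [ha, map_sub, lt 0 3 (by omega) (by omega), lt 0 2 (by omega) (by omega),
      hx0, map_zero, sub_zero]
  have da1 : E.d 3 1 a = 0 := by
    simp only [ha, map_sub, lt 1 3 (by omega) (by omega), lt 1 2 (by omega) (by omega),
      hx1, map_zero, sub_zero]
  have da2 : E.d 3 2 a = -x3 := by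
    simp only [ha, map_sub, lt 2 3 (by omega) (by omega), self 2 (by omega),
      hx2, map_zero, AlgHom.id_apply, zero_sub]
  have da3 : E.d 3 3 a = 0 := by
    simp only [ha, map_sub, self 3 (by omega), succ 2 (by omega), AlgHom.id_apply, sub_self]
  have da4 : E.d 3 4 a = x3 - E.s 2 2 (E.d 2 3 x3) := by
    simp only [ha, map_sub, succ 3 (by omega), gt 4 2 (by omega) (by omega), AlgHom.id_apply]
  have db0 : E.d 3 0 b = 0 := by
    simp only [hb, map_sub, map_add, map_neg, lt 0 1 (by omega) (by omega),
      lt 0 2 (by omega) (by omega), lt 0 3 (by omega) (by omega), hy0, map_zero]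
    ring
  have db1 : E.d 3 1 b = -y3 := by
    simp only [hb, map_sub, map_add, map_neg, self 1 (by omega),
      lt 1 2 (by omega) (by omega), lt 1 3 (by omega) (by omega), hy1, map_zero,
      AlgHom.id_apply]
    ring
  have db2 : E.d 3 2 b = 0 := by
    simp only [hb, map_sub, map_add, map_neg, succ 1 (by omega), self 2 (by omega),
      lt 2 3 (by omega) (by omega), hy2, map_zero, AlgHom.id_apply]
    ring
  have db3 : E.d 3 3 b = 0 := by
    simp only [hb, map_sub, map_add, map_neg, gt 3 1 (by omega) (by omega),
      succ 2 (by omega), self 3 (by omega), hy2, map_zero, AlgHom.id_apply]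
    ring
  have db4 : E.d 3 4 b = - E.s 2 1 (E.d 2 3 y3) + E.s 2 2 (E.d 2 3 y3) - y3 := by
    simp only [hb, map_sub, map_add, map_neg, gt 4 1 (by omega) (by omega),
      gt 4 2 (by omega) (by omega), succ 3 (by omega), AlgHom.id_apply]
  have hw : a * b = 0 := by
    apply hNE4
    · rw [map_mul, da0, zero_mul]
    · rw [map_mul, da1, zero_mul]
    · rw [map_mul, db2, mul_zero]
    · rw [map_mul, da3, zero_mul]
  have h4 : E.d 3 4 a * E.d 3 4 b = 0 := by rw [← map_mul, hw, map_zero]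
  rw [da4, db4] at h4
  linear_combination h4
end

section
/- Let E be a simplicial commutative k-algebra whose Moore complex satisfies NE_4 = 0. Then for all x_3, y_3 ∈ NE_3 the following identity holds in E_3: (s_1 d_3 x_3 − s_2 d_3 x_3 + x_3) · (s_2 d_3 y_3 − s_1 d_3 y_3 + s_0 d_3 y_3 − y_3) = 0. -/
theorem stmt_16 {k : Type*} [CommRing k] {obj : ℕ → Type*}
    [∀ n, CommRing (obj n)] [∀ n, Algebra k (obj n)]
    (E : SimplicialCommAlg k obj)
    (hNE4 : ∀ w : obj 4, E.d 3 0 w = 0 → E.d 3 1 w = 0 →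
      E.d 3 2 w = 0 → E.d 3 3 w = 0 → w = 0)
    (x3 : obj 3) (hx3 : E.d 2 0 x3 = 0 ∧ E.d 2 1 x3 = 0 ∧ E.d 2 2 x3 = 0) (y3 : obj 3) (hy3 : E.d 2 0 y3 = 0 ∧ E.d 2 1 y3 = 0 ∧ E.d 2 2 y3 = 0) :
    (E.s 2 1 (E.d 2 3 x3) - E.s 2 2 (E.d 2 3 x3) + x3) *
      (E.s 2 2 (E.d 2 3 y3) - E.s 2 1 (E.d 2 3 y3) + E.s 2 0 (E.d 2 3 y3) - y3) = 0 := by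
  obtain ⟨hx0, hx1, hx2⟩ := hx3
  obtain ⟨hy0, hy1, hy2⟩ := hy3
  set F : obj 4 := E.s 3 1 x3 - E.s 3 2 x3 + E.s 3 3 x3 with hFdef
  set G : obj 4 := E.s 3 0 y3 - E.s 3 1 y3 + E.s 3 2 y3 - E.s 3 3 y3 with hGdef
  -- pointwise simplicial identities
  have pt : ∀ {f g : obj 3 →ₐ[k] obj 3} (z : obj 3), f = g → f z = g z := by
    intro f g z h; rw [h]
  have lt : ∀ (i j : ℕ), i < j → j ≤ 3 → ∀ z : obj 3,
      E.d 3 i (E.s 3 j z) = E.s 2 (j - 1) (E.d 2 i z) := by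
    intro i j h1 h2 z
    exact DFunLike.congr_fun (E.ds_lt 2 i j h1 h2) z
  have self : ∀ (j : ℕ), j ≤ 3 → ∀ z : obj 3, E.d 3 j (E.s 3 j z) = z := by
    intro j h z
    exact DFunLike.congr_fun (E.ds_self 3 j h) z
  have succ : ∀ (j : ℕ), j ≤ 3 → ∀ z : obj 3, E.d 3 (j + 1) (E.s 3 j z) = z := by
    intro j h z
    exact DFunLike.congr_fun (E.ds_succ 3 j h) z
  have gt : ∀ (i j : ℕ), j + 1 < i → i ≤ 4 → ∀ z : obj 3,
      E.d 3 i (E.s 3 j z) = E.s 2 j (E.d 2 (i - 1) z) := by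
    intro i j h1 h2 z
    exact DFunLike.congr_fun (E.ds_gt 2 i j h1 h2) z
  -- faces of F
  have hF0 : E.d 3 0 F = 0 := by
    rw [hFdef, map_add, map_sub, lt 0 1 (by omega) (by omega),
      lt 0 2 (by omega) (by omega), lt 0 3 (by omega) (by omega)]
    norm_num [hx0]
  have hF2 : E.d 3 2 F = 0 := by
    rw [hFdef, map_add, map_sub, succ 1 (by omega), self 2 (by omega),
      lt 2 3 (by omega) (by omega)]
    norm_num [hx2]
  have hF3 : E.d 3 3 F = 0 := by
    rw [hFdef, map_add, map_sub, gt 3 1 (by omega) (by omega), succ 2 (by omega),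
      self 3 (by omega)]
    norm_num [hx2]
  have hF4 : E.d 3 4 F = E.s 2 1 (E.d 2 3 x3) - E.s 2 2 (E.d 2 3 x3) + x3 := by
    rw [hFdef, map_add, map_sub, gt 4 1 (by omega) (by omega),
      gt 4 2 (by omega) (by omega), succ 3 (by omega)]
  -- faces of G
  have hG1 : E.d 3 1 G = 0 := by
    rw [hGdef, map_sub, map_add, map_sub, succ 0 (by omega), self 1 (by omega),
      lt 1 2 (by omega) (by omega), lt 1 3 (by omega) (by omega)]
    norm_num [hy1]
  have hG4 : E.d 3 4 G = E.s 2 0 (E.d 2 3 y3) - E.s 2 1 (E.d 2 3 y3)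
      + E.s 2 2 (E.d 2 3 y3) - y3 := by
    rw [hGdef, map_sub, map_add, map_sub, gt 4 0 (by omega) (by omega),
      gt 4 1 (by omega) (by omega), gt 4 2 (by omega) (by omega), succ 3 (by omega)]
  have hw : F * G = 0 := by
    apply hNE4
    · rw [map_mul, hF0, zero_mul]
    · rw [map_mul, hG1, mul_zero]
    · rw [map_mul, hF2, zero_mul]
    · rw [map_mul, hF3, zero_mul]
  have key : E.d 3 4 (F * G) = 0 := by rw [hw, map_zero]
  rw [map_mul, hF4, hG4] at key
  linear_combination key
end

section
/- Let E be any simplicial commutative k-algebra, let D_4 denote the ideal of E_4 generated by the degenerate elements (the images of s_0, s_1, s_2, s_3 : E_3 → E_4), and let NE_4 = ⋂_{i=0}^{3} ker(d_i : E_4 → E_3). Then for all x_2 ∈ NE_2 and y_3 ∈ NE_3 the element s_2 x_2 · (s_1 d_3 y_3 − s_2 d_3 y_3 + y_3) of E_3 lies in d_4(NE_4 ∩ D_4); in particular, modulo d_4(NE_4 ∩ D_4) one has s_2 x_2 (s_1 d_3 y_3 − s_2 d_3 y_3) ≡ − s_2 x_2 · y_3. -/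
theorem stmt_19 {k : Type*} [CommRing k] {obj : ℕ → Type*}
    [∀ n, CommRing (obj n)] [∀ n, Algebra k (obj n)]
    (E : SimplicialCommAlg k obj)
    (x2 : obj 2) (hx2 : E.d 1 0 x2 = 0 ∧ E.d 1 1 x2 = 0) (y3 : obj 3) (hy3 : E.d 2 0 y3 = 0 ∧ E.d 2 1 y3 = 0 ∧ E.d 2 2 y3 = 0) :
    ∃ w : obj 4,
      (E.d 3 0 w = 0 ∧ E.d 3 1 w = 0 ∧ E.d 3 2 w = 0 ∧ E.d 3 3 w = 0) ∧
      w ∈ Ideal.span (Set.range (E.s 3 0) ∪ Set.range (E.s 3 1) ∪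
        Set.range (E.s 3 2) ∪ Set.range (E.s 3 3)) ∧
      E.d 3 4 w = E.s 2 2 x2 * (E.s 2 1 (E.d 2 3 y3) - E.s 2 2 (E.d 2 3 y3) + y3) := by

  refine ⟨E.s 3 3 (E.s 2 2 x2) * (E.s 3 1 y3 - E.s 3 2 y3 + E.s 3 3 y3), ?_, ?_, ?_⟩
  · obtain ⟨hx0, hx1⟩ := hx2
    obtain ⟨hy0, hy1, hy2⟩ := hy3
    have e03 := AlgHom.congr_fun (E.ds_lt 2 0 3 (by norm_num) (by norm_num))
    have e13 := AlgHom.congr_fun (E.ds_lt 2 1 3 (by norm_num) (by norm_num))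
    have e23 := AlgHom.congr_fun (E.ds_lt 2 2 3 (by norm_num) (by norm_num))
    have e01 := AlgHom.congr_fun (E.ds_lt 2 0 1 (by norm_num) (by norm_num))
    have e02 := AlgHom.congr_fun (E.ds_lt 2 0 2 (by norm_num) (by norm_num))
    have e12 := AlgHom.congr_fun (E.ds_lt 2 1 2 (by norm_num) (by norm_num))
    have e11 := AlgHom.congr_fun (E.ds_self 3 1 (by norm_num))
    have e22 := AlgHom.congr_fun (E.ds_self 3 2 (by norm_num))
    have e33 := AlgHom.congr_fun (E.ds_self 3 3 (by norm_num))
    have e21 := AlgHom.congr_fun (E.ds_succ 3 1 (by norm_num))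
    have e32 := AlgHom.congr_fun (E.ds_succ 3 2 (by norm_num))
    have e31 := AlgHom.congr_fun (E.ds_gt 2 3 1 (by norm_num) (by norm_num))
    have f02 := AlgHom.congr_fun (E.ds_lt 1 0 2 (by norm_num) (by norm_num))
    have f12 := AlgHom.congr_fun (E.ds_lt 1 1 2 (by norm_num) (by norm_num))
    have f22 := AlgHom.congr_fun (E.ds_self 2 2 (by norm_num))
    simp only [AlgHom.comp_apply, AlgHom.id_apply] at e03 e13 e23 e01 e02 e12 e11 e22 e33 e21 e32 e31 f02 f12 f22
    refine ⟨?_, ?_, ?_, ?_⟩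
    · rw [map_mul, map_add, map_sub, e03, e01, e02, e03, f02, hx0, hy0]
      simp
    · rw [map_mul, map_add, map_sub, e13, e12, e13, f12, hx1, hy1]
      simp
    · rw [map_mul, map_add, map_sub, e23, e21, e22, e23, f22, hy2]
      simp [sub_add_cancel]
    · rw [map_mul, map_add, map_sub, e33, e31, e32, e33, hy2]
      simp
  · rw [mul_comm]
    exact Ideal.mul_mem_left _ _ (Ideal.subset_span (by
      simp only [Set.mem_union, Set.mem_range]
      exact Or.inr ⟨E.s 2 2 x2, rfl⟩))
  · have g43 := AlgHom.congr_fun (E.ds_succ 3 3 (by norm_num))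
    have g41 := AlgHom.congr_fun (E.ds_gt 2 4 1 (by norm_num) (by norm_num))
    have g42 := AlgHom.congr_fun (E.ds_gt 2 4 2 (by norm_num) (by norm_num))
    simp only [AlgHom.comp_apply, AlgHom.id_apply] at g43 g41 g42
    rw [map_mul, map_add, map_sub, g43, g41, g42, g43]
end
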